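/- arXiv:2202.11695 — 2 statements merged into one kernel-verified Lean document; each statement's English description precedes it below -/
import Mathlib

section
/- Let L, J, K, m ∈ ℕ with K + 1 > 8·L·J and K ≥ 1. Let (a_n)_{n∈ℕ} be complex numbers with |a_n| ≤ Lⁿ for all n ≥ 1, and let f(z) = Σ_{n=0}^∞ (a_n/n!)·zⁿ (this series converges for every z ∈ ℂ). Let r_0,…,r_K be complex numbers with |a_n − r_n| ≤ 2^{−m} for all 0 ≤ n ≤ K. Then for every z ∈ ℂ with |z| ≤ J: |f(z) − Σ_{n=0}^{K} (r_n/n!)·zⁿ| ≤ 2^{2J−m} + 2^{−K}. -/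
open Complex Filter MeasureTheory
open scoped Real Topology Classical

/-- The actual bandwidth of `f`: `limsup_n |f⁽ⁿ⁾(0)|^(1/n)`. -/
noncomputable def bw (f : ℂ → ℂ) : ℝ :=
  Filter.limsup (fun n : ℕ => ‖iteratedDeriv n f 0‖ ^ ((n : ℝ)⁻¹)) Filter.atTop

/-- `r` is a description of the entire function `f` (via its Taylor coefficients at 0). -/
def IsDescription (r : ℕ × ℕ → ℚ × ℚ) (f : ℂ → ℂ) : Prop :=
  ∀ n m : ℕ,
    ‖iteratedDeriv n f 0 - (((r (n, m)).1 : ℂ) + ((r (n, m)).2 : ℂ) * Complex.I)‖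
      ≤ (2 : ℝ) ^ (-(m : ℤ))

/-- Membership in `CE_π`. -/
def MemCE (f : ℂ → ℂ) : Prop :=
  Differentiable ℂ f ∧ bw f ≤ Real.pi ∧ ∃ r : ℕ × ℕ → ℚ × ℚ, Computable r ∧ IsDescription r f

/-- Evaluation of the Gaussian-rational polynomial with coefficient list `c`. -/
noncomputable def polyEval (c : List (ℚ × ℚ)) (z : ℂ) : ℂ :=
  ((c.zipIdx.map Prod.swap).map fun p => (((p.2.1 : ℂ)) + (p.2.2 : ℂ) * Complex.I) * z ^ p.1).sum

/-- The natural number `e`, viewed as a code of a partial recursive function, computes the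
total function `g` (via the standard encodings). -/
def CodeComputes {α β : Type} [Primcodable α] [Primcodable β] (e : ℕ) (g : α → β) : Prop :=
  ∀ a : α, (Denumerable.ofNat Nat.Partrec.Code e).eval (Encodable.encode a) =
    Part.some (Encodable.encode (g a))

/-- `x` is a computable real number. -/
def ComputableReal (x : ℝ) : Prop :=
  ∃ r : ℕ → ℚ, Computable r ∧ ∀ m : ℕ, |x - (r m : ℝ)| ≤ (2 : ℝ) ^ (-(m : ℤ))

/-- The function `sinc_π` on the reals. -/
noncomputable def sincR (t : ℝ) : ℝ :=
  if t = 0 then 1 else Real.sin (Real.pi * t) / (Real.pi * t)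

/-- The elementary computable signal with coefficients `c k`, `k = -L, …, L`. -/
noncomputable def elemSignal (L : ℕ) (c : ℤ → ℚ × ℚ) (t : ℝ) : ℂ :=
  ∑ k ∈ Finset.Icc (-(L : ℤ)) (L : ℤ),
    (((c k).1 : ℂ) + ((c k).2 : ℂ) * Complex.I) * (sincR (t - k) : ℂ)

/-- Membership in `CB^p_π`. -/
def MemCB (p : ℝ) (f : ℂ → ℂ) : Prop :=
  Differentiable ℂ f ∧ bw f ≤ Real.pi ∧
    MemLp (fun t : ℝ => f t) (ENNReal.ofReal p) volume ∧
    ∃ (L : ℕ → ℕ) (c : ℕ → ℤ → ℚ × ℚ), Computable L ∧ Computable₂ c ∧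
      ∀ m : ℕ,
        eLpNorm (fun t : ℝ => f t - elemSignal (L m) (c m) t) (ENNReal.ofReal p) volume
          ≤ ENNReal.ofReal ((2 : ℝ) ^ (-(m : ℤ)))

lemma fact_lb (n : ℕ) : ((n : ℝ) / 3) ^ n ≤ (n.factorial : ℝ) := by
  induction n with
  | zero => simp
  | succ n ih =>
    have h3 : ((n : ℝ) + 1) ^ n ≤ 3 * (n : ℝ) ^ n := by
      rcases Nat.eq_zero_or_pos n with h | h
      · simp [h]
      · have hn : (0 : ℝ) < n := by exact_mod_cast h
        have h1 : ((n : ℝ) + 1) ≤ n * Real.exp (1 / n) := by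
          have h0 := Real.add_one_le_exp (1 / (n : ℝ))
          have h0' := mul_le_mul_of_nonneg_left h0 hn.le
          have hinv : (n : ℝ) * (1 / n) = 1 := by field_simp
          nlinarith
        have h2 : ((n : ℝ) + 1) ^ n ≤ ((n : ℝ) * Real.exp (1 / n)) ^ n :=
          pow_le_pow_left₀ (by positivity) h1 n
        have h4 : ((n : ℝ) * Real.exp (1 / n)) ^ n = (n : ℝ) ^ n * Real.exp 1 := by
          rw [mul_pow, ← Real.exp_nat_mul]
          congr 2
          field_simp
        have h5 : Real.exp 1 ≤ 3 := by
          have := Real.exp_one_lt_d9; linarith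
        have h6 : (0 : ℝ) ≤ (n : ℝ) ^ n := by positivity
        calc ((n : ℝ) + 1) ^ n ≤ (n : ℝ) ^ n * Real.exp 1 := by rw [← h4]; exact h2
          _ ≤ 3 * (n : ℝ) ^ n := by nlinarith
    have hmain : (((n : ℝ) + 1) / 3) ^ (n + 1) ≤ ((n : ℝ) + 1) * ((n : ℝ) / 3) ^ n := by
      have : (((n : ℝ) + 1) / 3) ^ (n + 1) = (((n : ℝ) + 1) ^ n / 3 ^ n) * (((n : ℝ) + 1) / 3) := by
        rw [pow_succ, div_pow]
      rw [this]
      have h7 : ((n : ℝ) + 1) ^ n / 3 ^ n ≤ 3 * ((n : ℝ) ^ n / 3 ^ n) := by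
        rw [← mul_div_assoc]
        apply div_le_div_of_nonneg_right h3 (by positivity)
      calc (((n : ℝ) + 1) ^ n / 3 ^ n) * (((n : ℝ) + 1) / 3)
          ≤ (3 * ((n : ℝ) ^ n / 3 ^ n)) * (((n : ℝ) + 1) / 3) := by
            apply mul_le_mul_of_nonneg_right h7 (by positivity)
        _ = ((n : ℝ) + 1) * ((n : ℝ) / 3) ^ n := by rw [div_pow]; ring
    have : (((n + 1 : ℕ) : ℝ) / 3) ^ (n + 1) ≤ ((n : ℝ) + 1) * ((n : ℝ) / 3) ^ n := by
      push_cast; exact hmain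
    refine this.trans ?_
    rw [Nat.factorial_succ]
    push_cast
    have : (0:ℝ) ≤ (n:ℝ) + 1 := by positivity
    nlinarith [ih]

theorem stmt2 (L J K m : ℕ) (hK : 8 * L * J < K + 1) (hK1 : 1 ≤ K)
    (a : ℕ → ℂ) (ha : ∀ n : ℕ, 1 ≤ n → ‖a n‖ ≤ (L : ℝ) ^ n)
    (r : ℕ → ℂ) (hr : ∀ n : ℕ, n ≤ K → ‖a n - r n‖ ≤ (2 : ℝ) ^ (-(m : ℤ)))
    (z : ℂ) (hz : ‖z‖ ≤ J) :
    ‖(∑' n : ℕ, a n / (n.factorial : ℂ) * z ^ n)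
        - ∑ n ∈ Finset.range (K + 1), r n / (n.factorial : ℂ) * z ^ n‖
      ≤ (2 : ℝ) ^ ((2 * (J : ℤ)) - (m : ℤ)) + (2 : ℝ) ^ (-(K : ℤ)) := by
  have hJ0 : (0 : ℝ) ≤ (J : ℝ) := Nat.cast_nonneg J
  have hz0 : (0 : ℝ) ≤ ‖z‖ := norm_nonneg z
  set x : ℝ := (L : ℝ) * J with hxdef
  have hx0 : 0 ≤ x := by positivity
  have h8x : 8 * x ≤ K := by
    have h : 8 * L * J ≤ K := Nat.lt_succ_iff.mp hK
    have := (Nat.cast_le (α := ℝ)).mpr h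
    push_cast at this
    rw [hxdef]; linarith
  -- termwise bound
  have hterm : ∀ n : ℕ, 1 ≤ n →
      ‖a n / (n.factorial : ℂ) * z ^ n‖ ≤ x ^ n / (n.factorial : ℝ) := by
    intro n hn
    rw [norm_mul, norm_div, norm_pow, Complex.norm_natCast]
    have hf : (0 : ℝ) < (n.factorial : ℝ) := by exact_mod_cast n.factorial_pos
    rw [div_mul_eq_mul_div, hxdef, mul_pow]
    rw [div_le_div_iff_of_pos_right hf]
    exact mul_le_mul (ha n hn) (pow_le_pow_left₀ hz0 hz n) (by positivity) (by positivity)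
  have hsumx : Summable (fun n : ℕ => x ^ n / (n.factorial : ℝ)) :=
    Real.summable_pow_div_factorial x
  have hsum : Summable (fun n : ℕ => a n / (n.factorial : ℂ) * z ^ n) := by
    rw [← summable_nat_add_iff 1]
    apply Summable.of_norm_bounded ((summable_nat_add_iff 1).mpr hsumx)
    intro n
    exact hterm (n + 1) (Nat.le_add_left 1 n)
  -- split
  have hsplit := Summable.sum_add_tsum_nat_add (f := fun n : ℕ => a n / (n.factorial : ℂ) * z ^ n)
    (K + 1) hsum
  set T : ℝ := x ^ (K + 1) / ((K + 1).factorial : ℝ) with hTdef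
  have hfpos : (0 : ℝ) < ((K + 1).factorial : ℝ) := by exact_mod_cast (K + 1).factorial_pos
  have hT0 : 0 ≤ T := by positivity
  have key : (∑' n : ℕ, a n / (n.factorial : ℂ) * z ^ n)
        - ∑ n ∈ Finset.range (K + 1), r n / (n.factorial : ℂ) * z ^ n
      = (∑ n ∈ Finset.range (K + 1), (a n - r n) / (n.factorial : ℂ) * z ^ n)
        + ∑' n : ℕ, a (n + (K + 1)) / ((n + (K + 1)).factorial : ℂ) * z ^ (n + (K + 1)) := by
    rw [← hsplit]
    have : ∑ n ∈ Finset.range (K + 1), (a n - r n) / (n.factorial : ℂ) * z ^ n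
        = (∑ n ∈ Finset.range (K + 1), a n / (n.factorial : ℂ) * z ^ n)
          - ∑ n ∈ Finset.range (K + 1), r n / (n.factorial : ℂ) * z ^ n := by
      rw [← Finset.sum_sub_distrib]
      exact Finset.sum_congr rfl fun n _ => by ring
    rw [this]; ring
  rw [key]
  refine (norm_add_le _ _).trans (add_le_add ?_ ?_)
  · -- finite part
    have h1 : ‖∑ n ∈ Finset.range (K + 1), (a n - r n) / (n.factorial : ℂ) * z ^ n‖
        ≤ ∑ n ∈ Finset.range (K + 1), (2 : ℝ) ^ (-(m : ℤ)) * ((J : ℝ) ^ n / (n.factorial : ℝ)) := by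
      refine (norm_sum_le _ _).trans (Finset.sum_le_sum fun n hn => ?_)
      rw [norm_mul, norm_div, norm_pow, Complex.norm_natCast]
      have hf : (0 : ℝ) < (n.factorial : ℝ) := by exact_mod_cast n.factorial_pos
      rw [div_mul_eq_mul_div, ← mul_div_assoc, div_le_div_iff_of_pos_right hf]
      have hb1 := hr n (Nat.lt_succ_iff.mp (Finset.mem_range.mp hn))
      have hb2 : ‖z‖ ^ n ≤ (J : ℝ) ^ n := pow_le_pow_left₀ hz0 hz n
      exact mul_le_mul hb1 hb2 (by positivity) (by positivity)
    refine h1.trans ?_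
    rw [← Finset.mul_sum]
    have h2 : ∑ n ∈ Finset.range (K + 1), (J : ℝ) ^ n / (n.factorial : ℝ) ≤ Real.exp J :=
      Real.sum_le_exp_of_nonneg hJ0 (K + 1)
    have h3 : Real.exp (J : ℝ) ≤ 4 ^ J := by
      have : Real.exp (J : ℝ) = Real.exp 1 ^ J := by
        rw [← Real.exp_nat_mul]; norm_num
      rw [this]
      exact pow_le_pow_left₀ (Real.exp_pos 1).le
        (by have := Real.exp_one_lt_d9; linarith) J
    have h4 : (2 : ℝ) ^ ((2 * (J : ℤ)) - (m : ℤ)) = (2 : ℝ) ^ (-(m : ℤ)) * 4 ^ J := by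
      rw [zpow_sub₀ (by norm_num : (2 : ℝ) ≠ 0), zpow_neg, div_eq_mul_inv, mul_comm]
      congr 1
      rw [zpow_mul, zpow_natCast]
      norm_num
    rw [h4]
    have hpos : (0:ℝ) ≤ (2 : ℝ) ^ (-(m : ℤ)) := by positivity
    exact mul_le_mul_of_nonneg_left (h2.trans h3) hpos
  · -- tail
    have hx8 : x ≤ ((K : ℝ) + 2) / 8 := by linarith
    have hgb : ∀ n : ℕ, ‖a (n + (K + 1)) / (((n + (K + 1)).factorial : ℕ) : ℂ)
        * z ^ (n + (K + 1))‖ ≤ T * ((8 : ℝ)⁻¹) ^ n := by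
      intro n
      refine (hterm (n + (K + 1)) (by omega)).trans ?_
      have hfact : ((K + 1).factorial : ℝ) * ((K : ℝ) + 2) ^ n ≤ ((n + (K + 1)).factorial : ℝ) := by
        have := Nat.factorial_mul_pow_le_factorial (m := K + 1) (n := n)
        have h2 : (K + 1) + n = n + (K + 1) := by omega
        rw [h2] at this
        have := (Nat.cast_le (α := ℝ)).mpr this
        push_cast at this
        exact (le_of_eq (by ring)).trans this
      have hd1 : (0 : ℝ) < ((K + 1).factorial : ℝ) * ((K : ℝ) + 2) ^ n := by positivity
      calc x ^ (n + (K + 1)) / ((n + (K + 1)).factorial : ℝ)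
          ≤ (x ^ (K + 1) * (((K : ℝ) + 2) / 8) ^ n) / (((K + 1).factorial : ℝ) * ((K : ℝ) + 2) ^ n) := by
            apply div_le_div₀ (by positivity) ?_ hd1 hfact
            rw [pow_add, mul_comm (x ^ n)]
            exact mul_le_mul_of_nonneg_left (pow_le_pow_left₀ hx0 hx8 n) (by positivity)
        _ = T * ((8 : ℝ)⁻¹) ^ n := by
            rw [hTdef, div_pow]
            have hK2 : ((K : ℝ) + 2) ^ n ≠ 0 := by positivity
            field_simp
            rw [mul_assoc, ← mul_pow]
            norm_num
    have hgeo : Summable (fun n : ℕ => T * ((8 : ℝ)⁻¹) ^ n) :=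
      (summable_geometric_of_lt_one (by norm_num) (by norm_num)).mul_left T
    have hgb' : ∀ n : ℕ, ‖a (n + (K + 1)) / (((n + (K + 1)).factorial : ℕ) : ℂ)
        * z ^ (n + (K + 1))‖ ≤ T * ((8 : ℝ)⁻¹) ^ n := by
      intro n
      exact hgb n
    have hnormsum : Summable (fun n : ℕ =>
        ‖a (n + (K + 1)) / (((n + (K + 1)).factorial : ℕ) : ℂ) * z ^ (n + (K + 1))‖) :=
      Summable.of_nonneg_of_le (fun n => norm_nonneg _) hgb' hgeo
    have h5 : ‖∑' n : ℕ, a (n + (K + 1)) / ((n + (K + 1)).factorial : ℂ)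
          * z ^ (n + (K + 1))‖ ≤ ∑' n : ℕ, T * ((8 : ℝ)⁻¹) ^ n := by
      exact (norm_tsum_le_tsum_norm hnormsum).trans (Summable.tsum_le_tsum hgb' hnormsum hgeo)
    refine h5.trans ?_
    rw [tsum_mul_left, tsum_geometric_of_lt_one (by norm_num) (by norm_num)]
    have hT38 : T ≤ (3 / 8 : ℝ) ^ (K + 1) := by
      have hxK : x ≤ ((K : ℝ) + 1) / 8 := by linarith
      have hfl : (((K : ℝ) + 1) / 3) ^ (K + 1) ≤ ((K + 1).factorial : ℝ) := by
        have := fact_lb (K + 1); push_cast at this; convert this using 2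
      have hnum : x ^ (K + 1) ≤ (((K : ℝ) + 1) / 8) ^ (K + 1) := pow_le_pow_left₀ hx0 hxK _
      have hdpos : (0 : ℝ) < (((K : ℝ) + 1) / 3) ^ (K + 1) := by positivity
      calc T ≤ (((K : ℝ) + 1) / 8) ^ (K + 1) / ((((K : ℝ) + 1) / 3) ^ (K + 1)) :=
            div_le_div₀ (by positivity) hnum hdpos hfl
        _ = (3 / 8 : ℝ) ^ (K + 1) := by
            rw [← div_pow]
            congr 1
            have hne : ((K : ℝ) + 1) ≠ 0 := by positivity
            field_simp
    have hgs : (1 - (8 : ℝ)⁻¹)⁻¹ = 8 / 7 := by norm_num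
    rw [hgs]
    have hhalf : (3 / 8 : ℝ) ^ (K + 1) ≤ ((2 : ℝ)⁻¹) ^ (K + 1) :=
      pow_le_pow_left₀ (by norm_num) (by norm_num) _
    have h2K : (2 : ℝ) ^ (-(K : ℤ)) = 2 * ((2 : ℝ)⁻¹) ^ (K + 1) := by
      rw [zpow_neg, zpow_natCast, ← inv_pow, pow_succ]
      ring
    calc T * (8 / 7) ≤ (3 / 8 : ℝ) ^ (K + 1) * 2 :=
          mul_le_mul hT38 (by norm_num) (by norm_num) (by positivity)
      _ ≤ 2 * ((2 : ℝ)⁻¹) ^ (K + 1) := by linarith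
      _ = (2 : ℝ) ^ (-(K : ℤ)) := h2K.symm
end

section
/- (Order-2 case of the lemma that an n-th order upper Zheng–Weihrauch description implies membership in Π_n.) Let x : ℕ×ℕ → ℝ be a computable double sequence of computable reals, i.e. there is a computable ρ : ℕ×ℕ×ℕ → ℚ with |x(m,k) − ρ(m,k,s)| ≤ 2^{−s} for all m, k, s. Assume that for each m the set {x(m,k) : k ∈ ℕ} is bounded above and that x* := inf_{m∈ℕ} sup_{k∈ℕ} x(m,k) is a real number (the infimum is finite). Then there exists a computable ρ' : ℕ×ℕ → ℚ such that for every m the set {ρ'(m,k) : k ∈ ℕ} is bounded above and x* = inf_{m∈ℕ} sup_{k∈ℕ} ρ'(m,k). -/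
open Complex Filter MeasureTheory
open scoped Real Topology Classical

namespace Stmt16Aux
open Encodable

/-! ### Integer and rational "nice" codes -/

def ic (z : ℤ) : ℕ := if 0 ≤ z then 2 * z.natAbs else 2 * z.natAbs - 1

lemma enc_int (z : ℤ) : @encode ℤ _ z = ic z := by
  cases z with
  | ofNat n => show 2 * n = _ ; simp [ic]
  | negSucc n => show 2 * n + 1 = _ ; simp [ic, Int.natAbs]; omega

def eOld (q : ℚ) : ℕ := Nat.pair (ic q.num) q.den

lemma enc_rat_old (q : ℚ) : @encode ℚ Rat.instEncodable q = eOld q := by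
  show Nat.pair (encode q.num) q.den = _
  rw [enc_int]; rfl

lemma icN (z : ℤ) : (ic z + 1) / 2 = z.natAbs := by
  unfold ic; split
  · omega
  · rename_i h
    have : z.natAbs ≠ 0 := by
      simp only [ne_eq, Int.natAbs_eq_zero]; omega
    omega

lemma ic_parity (z : ℤ) : ic z % 2 = 0 ↔ 0 ≤ z := by
  unfold ic; split
  · simpa using ‹0 ≤ z›
  · rename_i h
    have : z.natAbs ≠ 0 := by
      simp only [ne_eq, Int.natAbs_eq_zero]; omega
    constructor
    · intro hh; omega
    · intro hh; exact absurd hh h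

/-! ### S, decidability, infinite instances -/

abbrev S : Set ℕ := Set.range (@encode ℚ Rat.instEncodable)

instance decS : DecidablePred (· ∈ S) := Encodable.decidableRangeEncode ℚ

instance infS : Infinite S :=
  Infinite.of_injective _ (Equiv.ofInjective _ encode_injective).injective

/-! ### gcd is primrec -/

def gstep : ℕ × ℕ → ℕ × ℕ := fun p => if p.1 = 0 then p else (p.2 % p.1, p.1)

lemma gstep_iter : ∀ (k : ℕ) (b c : ℕ), b ≤ k → gstep^[k] (b, c) = (0, Nat.gcd b c) := by
  intro k
  induction k with
  | zero =>
    intro b c hb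
    have hb0 : b = 0 := Nat.le_zero.mp hb
    subst hb0; simp
  | succ k ih =>
    intro b c hb
    rw [Function.iterate_succ_apply]
    by_cases h : b = 0
    · subst h
      have : gstep (0, c) = (0, c) := by simp [gstep]
      rw [this, ih 0 c (Nat.zero_le _)]
    · have hpos : 0 < b := Nat.pos_of_ne_zero h
      have : gstep (b, c) = (c % b, b) := by simp [gstep, h]
      have hmod : c % b ≤ k := by
        have := Nat.mod_lt c hpos
        omega
      rw [this, ih _ _ hmod, ← Nat.gcd_rec]

lemma primrec_gcd : Primrec₂ Nat.gcd := by
  have hstep : Primrec gstep := by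
    refine Primrec.ite (Primrec.eq.comp Primrec.fst (Primrec.const 0)) Primrec.id ?_
    exact Primrec.pair (Primrec.nat_mod.comp Primrec.snd Primrec.fst) Primrec.fst
  have h : Primrec (fun p : ℕ × ℕ => (gstep^[p.1] p).2) := by
    have := Primrec.nat_iterate (Primrec.fst : Primrec (fun p : ℕ × ℕ => p.1))
      (Primrec.id : Primrec (fun p : ℕ × ℕ => p))
      (Primrec.comp₂ hstep Primrec₂.right : Primrec₂ fun (_ : ℕ × ℕ) (q : ℕ × ℕ) => gstep q)
    exact Primrec.snd.comp this
  exact h.of_eq fun p => by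
    have := gstep_iter p.1 p.1 p.2 le_rfl
    simp only [this]

/-! ### The membership predicate and counting function -/

def M (y : ℕ) : Bool :=
  decide (0 < y.unpair.2) && decide (Nat.gcd ((y.unpair.1 + 1) / 2) y.unpair.2 = 1)

lemma primrec_M : Primrec M := by
  have h2 : Primrec fun y : ℕ => y.unpair.2 := Primrec.snd.comp Primrec.unpair
  have h1 : Primrec fun y : ℕ => (y.unpair.1 + 1) / 2 :=
    Primrec.nat_div.comp (Primrec.succ.comp (Primrec.fst.comp Primrec.unpair))
      (Primrec.const 2)
  have c1 : Primrec fun y : ℕ => decide (0 < y.unpair.2) :=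
    (Primrec.nat_lt.comp (Primrec.const 0) h2).decide
  have c2 : Primrec fun y : ℕ => decide (Nat.gcd ((y.unpair.1 + 1) / 2) y.unpair.2 = 1) :=
    (Primrec.eq.comp (primrec_gcd.comp h1 h2) (Primrec.const 1)).decide
  exact ((Primrec.dom_bool₂ (· && ·)).comp c1 c2 : Primrec _)

lemma M_iff (y : ℕ) : M y = true ↔ y ∈ S := by
  rw [M]
  simp only [Bool.and_eq_true, decide_eq_true_eq]
  constructor
  · rintro ⟨hpos, hgcd⟩
    set a := y.unpair.1 with ha
    set d := y.unpair.2 with hd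
    set z : ℤ := if a % 2 = 0 then ((a / 2 : ℕ) : ℤ) else -(((a + 1) / 2 : ℕ) : ℤ) with hz
    have habs : z.natAbs = (a + 1) / 2 := by
      rw [hz]; split
      · simp only [Int.natAbs_natCast]; omega
      · simp only [Int.natAbs_neg, Int.natAbs_natCast]
    have hic : ic z = a := by
      rw [ic]
      split
      · rename_i h0
        rw [habs]
        rw [hz] at h0
        by_cases hp : a % 2 = 0
        · omega
        · exfalso
          rw [if_neg hp] at h0
          have : (a + 1) / 2 ≠ 0 := by omega
          simp only [Left.nonneg_neg_iff] at h0
          have := Int.natCast_nonneg ((a+1)/2 : ℕ)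
          have : (((a + 1) / 2 : ℕ) : ℤ) = 0 := le_antisymm h0 (Int.natCast_nonneg _)
          omega
      · rename_i h0
        rw [habs]
        rw [hz] at h0
        by_cases hp : a % 2 = 0
        · exfalso; rw [if_pos hp] at h0; exact h0 (Int.natCast_nonneg _)
        · omega
    refine ⟨⟨z, d, by omega, by rwa [habs]⟩, ?_⟩
    rw [enc_rat_old, eOld]
    show Nat.pair (ic z) d = y
    rw [hic]
    exact Nat.pair_unpair y
  · rintro ⟨q, rfl⟩
    rw [enc_rat_old, eOld, Nat.unpair_pair]
    simp only [icN]
    exact ⟨q.pos, q.reduced⟩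

def cnt (x : ℕ) : ℕ := (List.range x).countP M

lemma primrec_cnt : Primrec cnt := by
  have hh : Primrec₂ fun (_ : ℕ) (p : ℕ × ℕ) => if M p.2 then p.1 + 1 else p.1 := by
    refine Primrec.ite ?_ ?_ ?_
    · exact (Primrec.eq.comp (primrec_M.comp (Primrec.snd.comp Primrec.snd))
        (Primrec.const true)).of_eq fun p => by simp
    · exact Primrec.succ.comp (Primrec.fst.comp Primrec.snd)
    · exact Primrec.fst.comp Primrec.snd
  have h : Primrec fun x : ℕ =>
      (List.range x).foldl (fun acc y => if M y then acc + 1 else acc) 0 :=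
    Primrec.list_foldl Primrec.list_range (Primrec.const 0) hh
  refine h.of_eq fun x => ?_
  suffices H : ∀ (l : List ℕ) (n : ℕ),
      l.foldl (fun acc y => if M y then acc + 1 else acc) n = n + l.countP M by
    simpa [cnt] using H (List.range x) 0
  intro l
  induction l with
  | nil => intro n; simp
  | cons a l ih =>
    intro n
    simp only [List.foldl_cons, List.countP_cons, ih]
    by_cases h : M a <;> simp [h] <;> omega

/-! ### Bridging lemmas -/

lemma enc_sub (x : S) : @encode S (Nat.Subtype.denumerable S).toEncodable x
    = (List.range x.1).countP (fun y => decide (y ∈ S)) := rfl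

lemma ofNat_rat (n : ℕ) : Denumerable.ofNat ℚ n
    = (Encodable.equivRangeEncode ℚ).symm (@Denumerable.ofNat S (Nat.Subtype.denumerable S) n) :=
  rfl

lemma cnt_eq_encS (q : ℚ) (h : eOld q ∈ S) :
    cnt (eOld q) = @encode S (Nat.Subtype.denumerable S).toEncodable ⟨eOld q, h⟩ := by
  rw [enc_sub, cnt]
  refine List.countP_congr fun y _ => ?_
  by_cases hy : y ∈ S
  · simp [hy, (M_iff y).mpr hy]
  · have hM : M y = false := by
      rw [← Bool.not_eq_true, M_iff]; exact hy
    simp [hy, hM]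

lemma memS (q : ℚ) : eOld q ∈ S := ⟨q, enc_rat_old q⟩

lemma key1 (q : ℚ) : Denumerable.ofNat ℚ (cnt (eOld q)) = q := by
  rw [cnt_eq_encS q (memS q), ofNat_rat,
    @Denumerable.ofNat_encode S (Nat.Subtype.denumerable S) _]
  rw [Equiv.symm_apply_eq]
  exact Subtype.ext (enc_rat_old q).symm

lemma key2 (q : ℚ) : @encode ℚ ((inferInstance : Primcodable ℚ).toEncodable) q = cnt (eOld q) := by
  conv_lhs => rw [← key1 q]
  exact Denumerable.encode_ofNat _

/-! ### eOld is primrec -/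

lemma cnt_eq_card (x : ℕ) : cnt x = ((Finset.range x).filter (fun y => M y)).card := by
  rw [cnt, List.countP_eq_length_filter]
  have : ((Finset.range x).filter (fun y => M y)).card
      = ((List.range x).filter (fun y => decide (M y = true))).length := rfl
  rw [this]
  congr 1
  refine List.filter_congr fun y _ => ?_
  cases h : M y <;> simp [h]

lemma pair_le_pair_one {i r : ℕ} (h : i ≤ r) : Nat.pair i 1 ≤ Nat.pair r 1 := by
  unfold Nat.pair
  split <;> split <;> nlinarith

lemma M_pair_one (i : ℕ) : M (Nat.pair i 1) = true := by
  simp [M, Nat.unpair_pair, Nat.gcd_one_right]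

lemma eOld_le (q : ℚ) : eOld q ≤ Nat.pair (@encode ℚ ((inferInstance : Primcodable ℚ).toEncodable) q) 1 := by
  by_contra hlt
  push_neg at hlt
  set r := @encode ℚ ((inferInstance : Primcodable ℚ).toEncodable) q with hr
  have hkey : cnt (eOld q) = r := (key2 q).symm
  have hsub : (Finset.range (r + 1)).image (fun i => Nat.pair i 1)
      ⊆ (Finset.range (eOld q)).filter (fun y => M y) := by
    intro y hy
    simp only [Finset.mem_image, Finset.mem_range] at hy
    obtain ⟨i, hi, rfl⟩ := hy
    refine Finset.mem_filter.mpr ⟨Finset.mem_range.mpr ?_, M_pair_one i⟩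
    exact lt_of_le_of_lt (pair_le_pair_one (by omega)) hlt
  have hcard : r + 1 ≤ ((Finset.range (eOld q)).filter (fun y => M y)).card := by
    have hinj : Function.Injective (fun i : ℕ => Nat.pair i 1) := by
      intro i j hij
      have := congrArg (fun t => t.unpair.1) hij
      simpa [Nat.unpair_pair] using this
    calc r + 1 = ((Finset.range (r + 1)).image (fun i => Nat.pair i 1)).card := by
          rw [Finset.card_image_of_injective _ hinj, Finset.card_range]
      _ ≤ _ := Finset.card_le_card hsub
  rw [← cnt_eq_card, hkey] at hcard
  omega

lemma primrec_eOld : Primrec eOld := by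
  apply Primrec.of_graph
  · exact ⟨fun q => Nat.pair (@encode ℚ ((inferInstance : Primcodable ℚ).toEncodable) q) 1,
      Primrec₂.natPair.comp Primrec.encode (Primrec.const 1),
      fun q => eOld_le q⟩
  · have hrel : PrimrecRel fun (q : ℚ) (b : ℕ) =>
        M b = true ∧ cnt b = @encode ℚ ((inferInstance : Primcodable ℚ).toEncodable) q := by
      refine PrimrecPred.and ?_ ?_
      · exact Primrec.eq.comp (primrec_M.comp Primrec.snd) (Primrec.const true)
      · exact Primrec.eq.comp (primrec_cnt.comp Primrec.snd) (Primrec.encode.comp Primrec.fst)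
        
    refine hrel.of_eq fun q b => ?_
    constructor
    · rintro ⟨hM, hc⟩
      obtain ⟨q₀, hq₀⟩ := (M_iff b).mp hM
      rw [enc_rat_old] at hq₀
      subst hq₀
      have h2 : @encode ℚ ((inferInstance : Primcodable ℚ).toEncodable) q₀
          = @encode ℚ ((inferInstance : Primcodable ℚ).toEncodable) q := by
        rw [key2]; exact hc
      have h3 : q₀ = q := @encode_injective ℚ ((inferInstance : Primcodable ℚ).toEncodable) _ _ h2
      rw [h3]
    · rintro rfl
      exact ⟨(M_iff _).mpr (memS q), (key2 q).symm⟩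

/-! ### The code-level subtraction `q ↦ q - 2⁻ˢ` -/

def DD (c : ℕ × ℕ) : ℕ := c.1.unpair.2 * 2 ^ c.2

def UU (c : ℕ × ℕ) : ℕ :=
  if c.1.unpair.1 % 2 = 0 then
    (if c.1.unpair.2 ≤ ((c.1.unpair.1 + 1) / 2) * 2 ^ c.2 then
      ((c.1.unpair.1 + 1) / 2) * 2 ^ c.2 - c.1.unpair.2
     else c.1.unpair.2 - ((c.1.unpair.1 + 1) / 2) * 2 ^ c.2)
  else ((c.1.unpair.1 + 1) / 2) * 2 ^ c.2 + c.1.unpair.2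

def T (c : ℕ × ℕ) : ℕ :=
  Nat.pair
    (if c.1.unpair.1 % 2 = 0 ∧ c.1.unpair.2 ≤ ((c.1.unpair.1 + 1) / 2) * 2 ^ c.2 then
        2 * (UU c / Nat.gcd (UU c) (DD c))
     else 2 * (UU c / Nat.gcd (UU c) (DD c)) - 1)
    (DD c / Nat.gcd (UU c) (DD c))

lemma primrec_pow : Primrec₂ ((· ^ ·) : ℕ → ℕ → ℕ) :=
  Primrec₂.unpaired'.mp Nat.Primrec.pow

lemma primrec_T : Primrec T := by
  have pa : Primrec fun c : ℕ × ℕ => c.1.unpair.1 :=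
    Primrec.fst.comp (Primrec.unpair.comp Primrec.fst)
  have pd : Primrec fun c : ℕ × ℕ => c.1.unpair.2 :=
    Primrec.snd.comp (Primrec.unpair.comp Primrec.fst)
  have pN : Primrec fun c : ℕ × ℕ => (c.1.unpair.1 + 1) / 2 :=
    Primrec.nat_div.comp (Primrec.succ.comp pa) (Primrec.const 2)
  have pp : Primrec fun c : ℕ × ℕ => 2 ^ c.2 :=
    primrec_pow.comp (Primrec.const 2) Primrec.snd
  have pNp : Primrec fun c : ℕ × ℕ => ((c.1.unpair.1 + 1) / 2) * 2 ^ c.2 :=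
    Primrec.nat_mul.comp pN pp
  have pD : Primrec DD := Primrec.nat_mul.comp pd pp
  have cond1 : PrimrecPred fun c : ℕ × ℕ => c.1.unpair.1 % 2 = 0 :=
    Primrec.eq.comp (Primrec.nat_mod.comp pa (Primrec.const 2)) (Primrec.const 0)
  have cond2 : PrimrecPred fun c : ℕ × ℕ =>
      c.1.unpair.2 ≤ ((c.1.unpair.1 + 1) / 2) * 2 ^ c.2 :=
    Primrec.nat_le.comp pd pNp
  have pU : Primrec UU := by
    refine Primrec.ite cond1 ?_ ?_
    · exact Primrec.ite cond2 (Primrec.nat_sub.comp pNp pd) (Primrec.nat_sub.comp pd pNp)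
    · exact Primrec.nat_add.comp pNp pd
  have pg : Primrec fun c : ℕ × ℕ => Nat.gcd (UU c) (DD c) := primrec_gcd.comp pU pD
  have pq1 : Primrec fun c : ℕ × ℕ => 2 * (UU c / Nat.gcd (UU c) (DD c)) :=
    Primrec.nat_mul.comp (Primrec.const 2) (Primrec.nat_div.comp pU pg)
  refine Primrec₂.natPair.comp ?_ (Primrec.nat_div.comp pD pg)
  exact Primrec.ite (cond1.and cond2) pq1 (Primrec.nat_sub.comp pq1 (Primrec.const 1))

/-! ### Rational arithmetic facts -/

lemma sub_inv_pow_eq (q : ℚ) (s : ℕ) :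
    q - ((2 : ℚ) ^ s)⁻¹ =
      Rat.normalize (q.num * 2 ^ s - q.den) (q.den * 2 ^ s)
        (Nat.mul_ne_zero q.den_nz (Nat.pos_iff_ne_zero.mp (Nat.pow_pos (n := s) (by norm_num)))) := by
  have hd : (q.den : ℤ) ≠ 0 := Int.natCast_ne_zero.mpr q.den_nz
  have hp : ((2 : ℤ) ^ s) ≠ 0 := by positivity
  have h2 : (2 : ℚ) ^ s = (((2 : ℤ) ^ s : ℤ) : ℚ) := by push_cast; ring
  have hinv : ((2 : ℚ) ^ s)⁻¹ = Rat.divInt (1 : ℤ) ((2 : ℤ) ^ s) := by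
    rw [Rat.divInt_eq_div, h2]
    push_cast
    rw [one_div]
  have hq : q = Rat.divInt q.num (q.den : ℤ) := (Rat.num_divInt_den q).symm
  rw [hinv]
  conv_lhs => rw [hq]
  rw [Rat.divInt_sub_divInt _ _ hd hp]
  have he : (q.num * 2 ^ s - 1 * q.den) = q.num * 2 ^ s - q.den := by ring
  have hD : ((q.den : ℤ) * 2 ^ s) = ((q.den * 2 ^ s : ℕ) : ℤ) := by push_cast; ring
  rw [he, hD, Rat.divInt_ofNat, Rat.mkRat_def]
  rw [dif_neg (by positivity)]

lemma ic_ediv (ν : ℤ) (g : ℕ) (hg : 0 < g) (hdvd : (g : ℤ) ∣ ν) :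
    ic (ν / (g : ℤ)) = if 0 ≤ ν then 2 * (ν.natAbs / g) else 2 * (ν.natAbs / g) - 1 := by
  have habs : (ν / (g : ℤ)).natAbs = ν.natAbs / g := by
    rw [Int.natAbs_ediv_of_dvd hdvd]
    simp
  have hsign : 0 ≤ ν / (g : ℤ) ↔ 0 ≤ ν := by
    constructor
    · intro h
      have := Int.ediv_mul_cancel hdvd
      nlinarith [Int.natCast_pos.mpr hg]
    · intro h
      exact Int.ediv_nonneg h (by positivity)
  rw [ic, habs]
  split
  · rw [if_pos (hsign.mp ‹_›)]
  · rw [if_neg (fun h => ‹¬_› (hsign.mpr h))]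

lemma T_spec (q : ℚ) (s : ℕ) : T (eOld q, s) = eOld (q - ((2 : ℚ) ^ s)⁻¹) := by
  set n := q.num with hn
  set d := q.den with hd
  have hd0 : 0 < d := q.pos
  set A := n.natAbs with hA
  set p := 2 ^ s with hp
  have hp0 : 0 < p := by positivity
  set ν : ℤ := n * 2 ^ s - d with hν
  set Dn := d * p with hDn
  have hDn0 : 0 < Dn := by positivity
  set g := Nat.gcd ν.natAbs Dn with hg
  have hg0 : 0 < g := Nat.gcd_pos_of_pos_right _ hDn0
  have hgdvd : (g : ℤ) ∣ ν := by
    have h1 : g ∣ ν.natAbs := Nat.gcd_dvd_left _ _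
    have h2 : ((g : ℤ)).natAbs ∣ ν.natAbs := by simpa using h1
    exact Int.natAbs_dvd_natAbs.mp h2
  have hrhs : q - ((2 : ℚ) ^ s)⁻¹ = Rat.normalize ν Dn (by positivity) := by
    rw [sub_inv_pow_eq q s]
  have hnum : (q - ((2 : ℚ) ^ s)⁻¹).num = ν / (g : ℤ) := by
    rw [hrhs, Rat.normalize_eq]
  have hden : (q - ((2 : ℚ) ^ s)⁻¹).den = Dn / g := by
    rw [hrhs, Rat.normalize_eq]
  have hu1 : (eOld q, s).1.unpair.1 = ic n := by simp [eOld, Nat.unpair_pair, hn]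
  have hu2 : (eOld q, s).1.unpair.2 = d := by simp [eOld, Nat.unpair_pair, hd]
  have hN : ((eOld q, s).1.unpair.1 + 1) / 2 = A := by rw [hu1, icN]
  set AP := A * p with hAP
  have habs : (if ic n % 2 = 0 then (if d ≤ AP then AP - d else d - AP) else AP + d)
      = ν.natAbs := by
    by_cases hsgn : 0 ≤ n
    · have hpar : ic n % 2 = 0 := (ic_parity n).mpr hsgn
      have hν' : ν = (AP : ℤ) - (d : ℤ) := by
        have hnA : n = (A : ℤ) := by omega
        rw [hν, hnA, hAP, hp]; push_cast; ring
      rw [if_pos hpar]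
      by_cases hle : d ≤ AP
      · rw [if_pos hle]; omega
      · rw [if_neg hle]; omega
    · have hpar : ¬ (ic n % 2 = 0) := fun h => hsgn ((ic_parity n).mp h)
      have hν' : ν = -(AP : ℤ) - (d : ℤ) := by
        have hnA : n = -(A : ℤ) := by omega
        rw [hν, hnA, hAP, hp]; push_cast; ring
      rw [if_neg hpar]; omega
  have hcond : (ic n % 2 = 0 ∧ d ≤ AP) ↔ 0 ≤ ν := by
    by_cases hsgn : 0 ≤ n
    · have hpar : ic n % 2 = 0 := (ic_parity n).mpr hsgn
      have hν' : ν = (AP : ℤ) - (d : ℤ) := by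
        have hnA : n = (A : ℤ) := by omega
        rw [hν, hnA, hAP, hp]; push_cast; ring
      constructor
      · rintro ⟨-, hle⟩; omega
      · intro h0; exact ⟨hpar, by omega⟩
    · have hpar : ¬ (ic n % 2 = 0) := fun h => hsgn ((ic_parity n).mp h)
      have hν' : ν = -(AP : ℤ) - (d : ℤ) := by
        have hnA : n = -(A : ℤ) := by omega
        rw [hν, hnA, hAP, hp]; push_cast; ring
      constructor
      · rintro ⟨hc, -⟩; exact absurd hc hpar
      · intro h0; omega
  rw [hAP] at habs hcond
  have hs2 : (eOld q, s).2 = s := rfl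
  simp only [T, UU, DD, hu1, hu2, hs2, icN]
  rw [← hA, ← hp, habs]
  simp only [hcond]
  rw [← hDn]
  simp only [eOld]
  rw [hnum, hden, ic_ediv ν g hg0 hgdvd, ← hg]


/-! ### Final assembly -/

lemma val (q : ℚ) (s : ℕ) :
    Denumerable.ofNat ℚ (cnt (T (eOld q, s))) = q - ((2 : ℚ) ^ s)⁻¹ := by
  rw [T_spec, key1]

lemma main_comp (ρ : ℕ × ℕ × ℕ → ℚ) (hρ : Computable ρ) :
    Computable (fun p : ℕ × ℕ => Denumerable.ofNat ℚ (cnt (T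
      (eOld (ρ (p.1, (Nat.unpair p.2).1, (Nat.unpair p.2).2)), (Nat.unpair p.2).2)))) := by
  have pu1 : Primrec fun p : ℕ × ℕ => (Nat.unpair p.2).1 :=
    Primrec.fst.comp (Primrec.unpair.comp Primrec.snd)
  have pu2 : Primrec fun p : ℕ × ℕ => (Nat.unpair p.2).2 :=
    Primrec.snd.comp (Primrec.unpair.comp Primrec.snd)
  have h1 : Computable fun p : ℕ × ℕ =>
      (p.1, (Nat.unpair p.2).1, (Nat.unpair p.2).2) :=
    (Primrec.pair Primrec.fst (Primrec.pair pu1 pu2)).to_comp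
  have h2 : Computable fun p : ℕ × ℕ =>
      ρ (p.1, (Nat.unpair p.2).1, (Nat.unpair p.2).2) := hρ.comp h1
  have h3 : Computable fun p : ℕ × ℕ =>
      (eOld (ρ (p.1, (Nat.unpair p.2).1, (Nat.unpair p.2).2)), (Nat.unpair p.2).2) :=
    Computable.pair (primrec_eOld.to_comp.comp h2) pu2.to_comp
  exact ((Primrec.ofNat ℚ).comp (primrec_cnt.comp primrec_T)).to_comp.comp h3

end Stmt16Aux

theorem stmt16 (x : ℕ × ℕ → ℝ) (ρ : ℕ × ℕ × ℕ → ℚ) (hρ : Computable ρ)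
    (happ : ∀ m k s : ℕ, |x (m, k) - (ρ (m, k, s) : ℝ)| ≤ (2 : ℝ) ^ (-(s : ℤ)))
    (hb : ∀ m : ℕ, BddAbove (Set.range fun k : ℕ => x (m, k)))
    (hbelow : BddBelow (Set.range fun m : ℕ => ⨆ k : ℕ, x (m, k))) :
    ∃ ρ' : ℕ × ℕ → ℚ, Computable ρ' ∧
      (∀ m : ℕ, BddAbove (Set.range fun k : ℕ => (ρ' (m, k) : ℝ))) ∧
      (⨅ m : ℕ, ⨆ k : ℕ, x (m, k)) = ⨅ m : ℕ, ⨆ k : ℕ, (ρ' (m, k) : ℝ) := by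
  classical
  set F : ℕ → ℕ → ℝ := fun m k =>
    ((ρ (m, (Nat.unpair k).1, (Nat.unpair k).2) : ℚ) : ℝ) - ((2 : ℝ) ^ ((Nat.unpair k).2))⁻¹
    with hF
  have hzz : ∀ s : ℕ, (2 : ℝ) ^ (-(s : ℤ)) = ((2 : ℝ) ^ s)⁻¹ := fun s => by
    rw [zpow_neg, zpow_natCast]
  have hval : ∀ m k : ℕ,
      ((Denumerable.ofNat ℚ (Stmt16Aux.cnt (Stmt16Aux.T
        (Stmt16Aux.eOld (ρ (m, (Nat.unpair k).1, (Nat.unpair k).2)), (Nat.unpair k).2))) : ℚ) : ℝ)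
        = F m k := by
    intro m k
    rw [Stmt16Aux.val]
    rw [hF]
    push_cast
    ring
  have hub : ∀ m k : ℕ, F m k ≤ x (m, (Nat.unpair k).1) := by
    intro m k
    have h := abs_le.mp (happ m (Nat.unpair k).1 (Nat.unpair k).2)
    rw [hzz] at h
    rw [hF]
    have := h.1
    linarith
  have hbF : ∀ m : ℕ, BddAbove (Set.range fun k : ℕ => F m k) := by
    intro m
    refine ⟨⨆ k : ℕ, x (m, k), ?_⟩
    rintro y ⟨k, rfl⟩
    exact (hub m k).trans (le_ciSup (hb m) _)
  have hsup : ∀ m : ℕ, (⨆ k : ℕ, F m k) = ⨆ k : ℕ, x (m, k) := by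
    intro m
    apply le_antisymm
    · exact ciSup_le fun k => (hub m k).trans (le_ciSup (hb m) _)
    · refine ciSup_le fun a => ?_
      have hstep : ∀ s : ℕ, x (m, a) ≤ (⨆ k : ℕ, F m k) + 2 * ((2 : ℝ) ^ s)⁻¹ := by
        intro s
        have h1 : F m (Nat.pair a s) ≤ ⨆ k : ℕ, F m k := le_ciSup (hbF m) _
        have h2 := (abs_le.mp (happ m a s)).2
        rw [hzz] at h2
        have h3 : F m (Nat.pair a s)
            = ((ρ (m, a, s) : ℚ) : ℝ) - ((2 : ℝ) ^ s)⁻¹ := by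
          rw [hF]
          simp [Nat.unpair_pair]
        rw [h3] at h1
        linarith
      have htend : Filter.Tendsto
          (fun s : ℕ => (⨆ k : ℕ, F m k) + 2 * ((2 : ℝ) ^ s)⁻¹)
          Filter.atTop (𝓝 ((⨆ k : ℕ, F m k) + 2 * 0)) := by
        refine Filter.Tendsto.add tendsto_const_nhds (Filter.Tendsto.const_mul _ ?_)
        have h0 : Filter.Tendsto (fun s : ℕ => ((2 : ℝ)⁻¹) ^ s) Filter.atTop (𝓝 0) :=
          tendsto_pow_atTop_nhds_zero_of_lt_one (by norm_num) (by norm_num)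
        simpa only [inv_pow] using h0
      have := ge_of_tendsto' htend hstep
      simpa using this
  refine ⟨fun p => Denumerable.ofNat ℚ (Stmt16Aux.cnt (Stmt16Aux.T
      (Stmt16Aux.eOld (ρ (p.1, (Nat.unpair p.2).1, (Nat.unpair p.2).2)), (Nat.unpair p.2).2))),
    Stmt16Aux.main_comp ρ hρ, ?_, ?_⟩
  · intro m
    have : (fun k : ℕ => ((Denumerable.ofNat ℚ (Stmt16Aux.cnt (Stmt16Aux.T
        (Stmt16Aux.eOld (ρ (m, (Nat.unpair k).1, (Nat.unpair k).2)), (Nat.unpair k).2))) : ℚ) : ℝ))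
        = fun k => F m k := funext fun k => hval m k
    rw [this]
    exact hbF m
  · refine iInf_congr fun m => ?_
    rw [← hsup m]
    refine iSup_congr fun k => ?_
    exact (hval m k).symm
end
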